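/- If μₓ₁, μᵧ₁ and μₓ₂, μᵧ₂ are two solutions of the entropic fixed point system ρₓ(x) = Zₓ⁻¹ exp(−β∫ℓ(x,y)dμᵧ(y)), ρᵧ(y) = Zᵧ⁻¹ exp(β∫ℓ(x,y)dμₓ(x)), then combining the first-order optimality conditions yields that β⁻¹(H(μₓ₂‖μₓ₁) + H(μₓ₁‖μₓ₂) + H(μᵧ₂‖μᵧ₁) + H(μᵧ₁‖μᵧ₂)) = 0, hence μₓ₁ = μₓ₂ and μᵧ₁ = μᵧ₂ (the fixed point is unique). -/

import Mathlib

open MeasureTheory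

/-- Real-valued relative entropy `H(μ‖ν) = ∫ log (dμ/dν) dμ`. -/
noncomputable def relEntropyR {X : Type*} [MeasurableSpace X] (μ ν : Measure X) : ℝ :=
  ∫ x, Real.log ((μ.rnDeriv ν x).toReal) ∂μ

/-- Gibbs' inequality with equality case: for mutually absolutely continuous probability
measures, the relative entropy is nonnegative and vanishes only when the measures agree. -/
lemma gibbs_aux {α : Type*} [MeasurableSpace α] (μ ν : Measure α)
    [IsProbabilityMeasure μ] [IsProbabilityMeasure ν]
    (hμν : μ ≪ ν) (hνμ : ν ≪ μ)
    (hint : Integrable (fun x => Real.log ((μ.rnDeriv ν x).toReal)) μ) :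
    0 ≤ ∫ x, Real.log ((μ.rnDeriv ν x).toReal) ∂μ ∧
      (∫ x, Real.log ((μ.rnDeriv ν x).toReal) ∂μ = 0 → μ = ν) := by
  set g : α → ℝ := fun x => (ν.rnDeriv μ x).toReal with hg
  have hg_int : Integrable g μ := Measure.integrable_toReal_rnDeriv
  have hg_eq : ∫ x, g x ∂μ = 1 := by
    rw [hg]
    simp [Measure.integral_toReal_rnDeriv hνμ]
  have h_pos : ∀ᵐ x ∂μ, 0 < μ.rnDeriv ν x := Measure.rnDeriv_pos hμν
  have h_lt_top : ∀ᵐ x ∂μ, μ.rnDeriv ν x < ⊤ := hμν.ae_le (Measure.rnDeriv_lt_top μ ν)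
  have h_inv : (μ.rnDeriv ν)⁻¹ =ᵐ[μ] ν.rnDeriv μ := Measure.inv_rnDeriv hμν
  have h_lt_top' : ∀ᵐ x ∂μ, ν.rnDeriv μ x < ⊤ := Measure.rnDeriv_lt_top ν μ
  have key : ∀ᵐ x ∂μ,
      (0 < g x ∧ Real.log ((μ.rnDeriv ν x).toReal) = -Real.log (g x)) := by
    filter_upwards [h_pos, h_lt_top, h_inv] with x hx1 hx2 hx3
    have hr_pos : 0 < (μ.rnDeriv ν x).toReal := ENNReal.toReal_pos hx1.ne' hx2.ne
    have hgx : g x = ((μ.rnDeriv ν x).toReal)⁻¹ := by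
      rw [hg]; simp only [← hx3, Pi.inv_apply, ENNReal.toReal_inv]
    constructor
    · rw [hgx]; positivity
    · rw [hgx, Real.log_inv, neg_neg]
  set h : α → ℝ := fun x => Real.log ((μ.rnDeriv ν x).toReal) - (1 - g x) with hh
  have hh_int : Integrable h μ := hint.sub ((integrable_const (1:ℝ)).sub hg_int)
  have hh_nonneg : ∀ᵐ x ∂μ, 0 ≤ h x := by
    filter_upwards [key] with x ⟨hx1, hx2⟩
    have := Real.log_le_sub_one_of_pos hx1
    simp only [hh, hx2]; linarith
  have h1g : Integrable (fun x => 1 - g x) μ := (integrable_const (1:ℝ)).sub hg_int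
  have hh_integral : ∫ x, h x ∂μ = ∫ x, Real.log ((μ.rnDeriv ν x).toReal) ∂μ := by
    simp only [hh]
    rw [integral_sub hint h1g, integral_sub (integrable_const (1:ℝ)) hg_int, hg_eq]
    simp
  constructor
  · rw [← hh_integral]
    exact integral_nonneg_of_ae hh_nonneg
  · intro h0
    have : ∫ x, h x ∂μ = 0 := by rw [hh_integral, h0]
    have hae : h =ᵐ[μ] 0 := (integral_eq_zero_iff_of_nonneg_ae hh_nonneg hh_int).mp this
    have hg1 : ∀ᵐ x ∂μ, ν.rnDeriv μ x = 1 := by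
      filter_upwards [key, hae, h_lt_top'] with x ⟨hx1, hx2⟩ hx3 hx4
      have hx3' : Real.log (g x) = g x - 1 := by
        simp only [hh, hx2, Pi.zero_apply] at hx3
        linarith
      have hgx1 : g x = 1 := by
        by_contra hne
        exact absurd hx3' (ne_of_lt (Real.log_lt_sub_one_of_pos hx1 hne))
      have : (ν.rnDeriv μ x).toReal = 1 := hgx1
      rw [← ENNReal.ofReal_toReal hx4.ne, this]; simp
    have := Measure.withDensity_rnDeriv_eq ν μ hνμ
    have h1 : μ.withDensity (fun _ => (1:ENNReal)) = μ := by simp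
    rw [← this, withDensity_congr_ae hg1, h1]

lemma ratio_withDensity {α : Type*} [MeasurableSpace α] (m : Measure α)
    {f g : α → ℝ} (hf : Measurable f) (hg : Measurable g) (hfpos : ∀ x, 0 < f x) :
    m.withDensity (fun x => ENNReal.ofReal (g x)) =
      (m.withDensity fun x => ENNReal.ofReal (f x)).withDensity
        fun x => ENNReal.ofReal (g x / f x) := by
  rw [← withDensity_mul _ hf.ennreal_ofReal
    (show Measurable fun x => ENNReal.ofReal (g x / f x) from (hg.div hf).ennreal_ofReal)]
  apply withDensity_congr_ae
  refine Filter.Eventually.of_forall fun x => ?_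
  simp only [Pi.mul_apply]
  rw [← ENNReal.ofReal_mul (hfpos x).le, ← mul_div_assoc, mul_div_cancel_left₀ _ (hfpos x).ne']

/-- All the entropy facts for one marginal pair with explicit positive densities. -/
lemma side_lemma {α : Type*} [MeasurableSpace α] (m : Measure α)
    (μ₁ μ₂ : Measure α) [IsProbabilityMeasure μ₁] [IsProbabilityMeasure μ₂]
    {f₁ f₂ : α → ℝ} (hf₁ : Measurable f₁) (hf₂ : Measurable f₂)
    (hp₁ : ∀ x, 0 < f₁ x) (hp₂ : ∀ x, 0 < f₂ x)
    (h₁ : μ₁ = m.withDensity fun x => ENNReal.ofReal (f₁ x))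
    (h₂ : μ₂ = m.withDensity fun x => ENNReal.ofReal (f₂ x))
    {L : α → ℝ} (hL : ∀ x, L x = Real.log (f₂ x) - Real.log (f₁ x))
    (hLint₁ : Integrable L μ₁) (hLint₂ : Integrable L μ₂) :
    relEntropyR μ₂ μ₁ = ∫ x, L x ∂μ₂ ∧ relEntropyR μ₁ μ₂ = - ∫ x, L x ∂μ₁ ∧
      0 ≤ relEntropyR μ₂ μ₁ ∧ 0 ≤ relEntropyR μ₁ μ₂ ∧
      (relEntropyR μ₂ μ₁ = 0 → μ₁ = μ₂) := by
  have e₂ : μ₂ = μ₁.withDensity fun x => ENNReal.ofReal (f₂ x / f₁ x) := by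
    rw [h₂, ratio_withDensity m hf₁ hf₂ hp₁, ← h₁]
  have e₁ : μ₁ = μ₂.withDensity fun x => ENNReal.ofReal (f₁ x / f₂ x) := by
    rw [h₁, ratio_withDensity m hf₂ hf₁ hp₂, ← h₂]
  have hac21 : μ₂ ≪ μ₁ := by
    rw [e₂]; exact withDensity_absolutelyContinuous _ _
  have hac12 : μ₁ ≪ μ₂ := by
    rw [e₁]; exact withDensity_absolutelyContinuous _ _
  have hr21 : μ₂.rnDeriv μ₁ =ᵐ[μ₁] fun x => ENNReal.ofReal (f₂ x / f₁ x) := by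
    rw [e₂]; exact Measure.rnDeriv_withDensity _ ((hf₂.div hf₁).ennreal_ofReal)
  have hr12 : μ₁.rnDeriv μ₂ =ᵐ[μ₂] fun x => ENNReal.ofReal (f₁ x / f₂ x) := by
    rw [e₁]; exact Measure.rnDeriv_withDensity _ ((hf₁.div hf₂).ennreal_ofReal)
  have hllr21 : (fun x => Real.log ((μ₂.rnDeriv μ₁ x).toReal)) =ᵐ[μ₁] L := by
    filter_upwards [hr21] with x hx
    rw [hx, ENNReal.toReal_ofReal (div_nonneg (hp₂ x).le (hp₁ x).le),
      Real.log_div (hp₂ x).ne' (hp₁ x).ne', hL x]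
  have hllr12 : (fun x => Real.log ((μ₁.rnDeriv μ₂ x).toReal)) =ᵐ[μ₂] fun x => -L x := by
    filter_upwards [hr12] with x hx
    rw [hx, ENNReal.toReal_ofReal (div_nonneg (hp₁ x).le (hp₂ x).le),
      Real.log_div (hp₁ x).ne' (hp₂ x).ne', hL x]
    ring
  have hllr21' : (fun x => Real.log ((μ₂.rnDeriv μ₁ x).toReal)) =ᵐ[μ₂] L :=
    hllr21.filter_mono hac21.ae_le
  have hllr12' : (fun x => Real.log ((μ₁.rnDeriv μ₂ x).toReal)) =ᵐ[μ₁] fun x => -L x :=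
    hllr12.filter_mono hac12.ae_le
  have heq2 : relEntropyR μ₂ μ₁ = ∫ x, L x ∂μ₂ := integral_congr_ae hllr21'
  have heq1 : relEntropyR μ₁ μ₂ = - ∫ x, L x ∂μ₁ := by
    rw [relEntropyR, integral_congr_ae hllr12', integral_neg]
  have hint21 : Integrable (fun x => Real.log ((μ₂.rnDeriv μ₁ x).toReal)) μ₂ :=
    hLint₂.congr hllr21'.symm
  have hint12 : Integrable (fun x => Real.log ((μ₁.rnDeriv μ₂ x).toReal)) μ₁ :=
    (hLint₁.neg).congr hllr12'.symm
  obtain ⟨hnn21, hz21⟩ := gibbs_aux μ₂ μ₁ hac21 hac12 hint21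
  obtain ⟨hnn12, _⟩ := gibbs_aux μ₁ μ₂ hac12 hac21 hint12
  exact ⟨heq2, heq1, hnn21, hnn12, fun h => (hz21 h).symm⟩

/-- Uniqueness of the entropic fixed point: two solutions of the system
`ρₓ = Zₓ⁻¹ exp(−β∫ℓ dμᵧ)`, `ρᵧ = Zᵧ⁻¹ exp(β∫ℓ dμₓ)` have vanishing symmetrized relative
entropy and hence coincide. -/
theorem stmt9 {X Y : Type*} [MetricSpace X] [CompactSpace X] [MeasurableSpace X] [BorelSpace X]
    [MetricSpace Y] [CompactSpace Y] [MeasurableSpace Y] [BorelSpace Y]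
    (mX : Measure X) (mY : Measure Y)
    (ℓ : X → Y → ℝ) (hℓ : Continuous fun p : X × Y => ℓ p.1 p.2)
    (β : ℝ) (hβ : 0 < β)
    (μx₁ μx₂ : Measure X) (μy₁ μy₂ : Measure Y)
    [IsProbabilityMeasure μx₁] [IsProbabilityMeasure μx₂]
    [IsProbabilityMeasure μy₁] [IsProbabilityMeasure μy₂]
    (Zx₁ Zy₁ Zx₂ Zy₂ : ℝ)
    (hZx₁ : 0 < Zx₁) (hZy₁ : 0 < Zy₁) (hZx₂ : 0 < Zx₂) (hZy₂ : 0 < Zy₂)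
    (h₁x : μx₁ = mX.withDensity fun x =>
      ENNReal.ofReal (Zx₁⁻¹ * Real.exp (-(β * ∫ y, ℓ x y ∂μy₁))))
    (h₁y : μy₁ = mY.withDensity fun y =>
      ENNReal.ofReal (Zy₁⁻¹ * Real.exp (β * ∫ x, ℓ x y ∂μx₁)))
    (h₂x : μx₂ = mX.withDensity fun x =>
      ENNReal.ofReal (Zx₂⁻¹ * Real.exp (-(β * ∫ y, ℓ x y ∂μy₂))))
    (h₂y : μy₂ = mY.withDensity fun y =>
      ENNReal.ofReal (Zy₂⁻¹ * Real.exp (β * ∫ x, ℓ x y ∂μx₂))) :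
    β⁻¹ * (relEntropyR μx₂ μx₁ + relEntropyR μx₁ μx₂ +
        relEntropyR μy₂ μy₁ + relEntropyR μy₁ μy₂) = 0 ∧
      μx₁ = μx₂ ∧ μy₁ = μy₂ := by
  -- a uniform bound on ℓ
  obtain ⟨M, hM⟩ := IsCompact.exists_bound_of_continuousOn isCompact_univ hℓ.continuousOn
  -- integrability of the partial integrals
  have hIF : ∀ (ν : Measure Y) (μ : Measure X) [IsProbabilityMeasure ν] [IsProbabilityMeasure μ],
      Integrable (fun x => ∫ y, ℓ x y ∂ν) μ := by
    intro ν μ _ _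
    refine (integrable_const M).mono'
      (hℓ.stronglyMeasurable.integral_prod_right').aestronglyMeasurable
      (Filter.Eventually.of_forall fun x => ?_)
    calc ‖∫ y, ℓ x y ∂ν‖ ≤ M * (ν Set.univ).toReal :=
          norm_integral_le_of_norm_le_const
            (Filter.Eventually.of_forall fun y => hM (x, y) (Set.mem_univ _))
      _ = M := by simp
  have hIG : ∀ (μ : Measure X) (ν : Measure Y) [IsProbabilityMeasure μ] [IsProbabilityMeasure ν],
      Integrable (fun y => ∫ x, ℓ x y ∂μ) ν := by
    intro μ ν _ _
    refine (integrable_const M).mono'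
      (hℓ.stronglyMeasurable.integral_prod_left').aestronglyMeasurable
      (Filter.Eventually.of_forall fun y => ?_)
    calc ‖∫ x, ℓ x y ∂μ‖ ≤ M * (μ Set.univ).toReal :=
          norm_integral_le_of_norm_le_const
            (Filter.Eventually.of_forall fun x => hM (x, y) (Set.mem_univ _))
      _ = M := by simp
  -- Fubini
  have fub : ∀ (μ : Measure X) (ν : Measure Y) [IsProbabilityMeasure μ] [IsProbabilityMeasure ν],
      ∫ y, ∫ x, ℓ x y ∂μ ∂ν = ∫ x, ∫ y, ℓ x y ∂ν ∂μ := by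
    intro μ ν _ _
    refine (integral_integral_swap ?_).symm
    exact (integrable_const M).mono' hℓ.aestronglyMeasurable
      (Filter.Eventually.of_forall fun p => hM p (Set.mem_univ _))
  -- the X side
  set LX : X → ℝ := fun x => Real.log Zx₂⁻¹ - Real.log Zx₁⁻¹ +
      (β * ∫ y, ℓ x y ∂μy₁ - β * ∫ y, ℓ x y ∂μy₂) with hLXdef
  have hLX : ∀ x, LX x = Real.log (Zx₂⁻¹ * Real.exp (-(β * ∫ y, ℓ x y ∂μy₂))) -
      Real.log (Zx₁⁻¹ * Real.exp (-(β * ∫ y, ℓ x y ∂μy₁)))  := by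
    intro x
    rw [Real.log_mul (ne_of_gt (inv_pos.2 hZx₂)) (Real.exp_ne_zero _),
      Real.log_mul (ne_of_gt (inv_pos.2 hZx₁)) (Real.exp_ne_zero _),
      Real.log_exp, Real.log_exp, hLXdef]
    ring
  have hLXint : ∀ (μ : Measure X) [IsProbabilityMeasure μ], Integrable LX μ := by
    intro μ _
    exact (integrable_const _).add (((hIF μy₁ μ).const_mul β).sub ((hIF μy₂ μ).const_mul β))
  have hLXval : ∀ (μ : Measure X) [IsProbabilityMeasure μ],
      ∫ x, LX x ∂μ = Real.log Zx₂⁻¹ - Real.log Zx₁⁻¹ +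
        (β * ∫ x, ∫ y, ℓ x y ∂μy₁ ∂μ - β * ∫ x, ∫ y, ℓ x y ∂μy₂ ∂μ) := by
    intro μ _
    have h1 : Integrable (fun x => β * ∫ y, ℓ x y ∂μy₁ - β * ∫ y, ℓ x y ∂μy₂) μ :=
      ((hIF μy₁ μ).const_mul β).sub ((hIF μy₂ μ).const_mul β)
    rw [hLXdef, integral_add (integrable_const _) h1,
      integral_sub ((hIF μy₁ μ).const_mul β) ((hIF μy₂ μ).const_mul β),
      integral_const_mul, integral_const_mul, integral_const]
    simp
  have hmfx₁ : Measurable fun x => Zx₁⁻¹ * Real.exp (-(β * ∫ y, ℓ x y ∂μy₁)) :=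
    measurable_const.mul
      (((hℓ.stronglyMeasurable.integral_prod_right'.measurable.const_mul β).neg).exp)
  have hmfx₂ : Measurable fun x => Zx₂⁻¹ * Real.exp (-(β * ∫ y, ℓ x y ∂μy₂)) :=
    measurable_const.mul
      (((hℓ.stronglyMeasurable.integral_prod_right'.measurable.const_mul β).neg).exp)
  obtain ⟨hx2eq, hx1eq, hx2nn, hx1nn, hxz⟩ :=
    side_lemma mX μx₁ μx₂ hmfx₁ hmfx₂
      (fun x => by positivity) (fun x => by positivity) h₁x h₂x hLX
      (hLXint μx₁) (hLXint μx₂)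
  -- the Y side
  set LY : Y → ℝ := fun y => Real.log Zy₂⁻¹ - Real.log Zy₁⁻¹ +
      (β * ∫ x, ℓ x y ∂μx₂ - β * ∫ x, ℓ x y ∂μx₁) with hLYdef
  have hLY : ∀ y, LY y = Real.log (Zy₂⁻¹ * Real.exp (β * ∫ x, ℓ x y ∂μx₂)) -
      Real.log (Zy₁⁻¹ * Real.exp (β * ∫ x, ℓ x y ∂μx₁)) := by
    intro y
    rw [Real.log_mul (ne_of_gt (inv_pos.2 hZy₂)) (Real.exp_ne_zero _),
      Real.log_mul (ne_of_gt (inv_pos.2 hZy₁)) (Real.exp_ne_zero _),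
      Real.log_exp, Real.log_exp, hLYdef]
    ring
  have hLYint : ∀ (ν : Measure Y) [IsProbabilityMeasure ν], Integrable LY ν := by
    intro ν _
    exact (integrable_const _).add (((hIG μx₂ ν).const_mul β).sub ((hIG μx₁ ν).const_mul β))
  have hLYval : ∀ (ν : Measure Y) [IsProbabilityMeasure ν],
      ∫ y, LY y ∂ν = Real.log Zy₂⁻¹ - Real.log Zy₁⁻¹ +
        (β * ∫ y, ∫ x, ℓ x y ∂μx₂ ∂ν - β * ∫ y, ∫ x, ℓ x y ∂μx₁ ∂ν) := by
    intro ν _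
    have h1 : Integrable (fun y => β * ∫ x, ℓ x y ∂μx₂ - β * ∫ x, ℓ x y ∂μx₁) ν :=
      ((hIG μx₂ ν).const_mul β).sub ((hIG μx₁ ν).const_mul β)
    rw [hLYdef, integral_add (integrable_const _) h1,
      integral_sub ((hIG μx₂ ν).const_mul β) ((hIG μx₁ ν).const_mul β),
      integral_const_mul, integral_const_mul, integral_const]
    simp
  have hmgy₁ : Measurable fun y => Zy₁⁻¹ * Real.exp (β * ∫ x, ℓ x y ∂μx₁) :=
    measurable_const.mul
      ((hℓ.stronglyMeasurable.integral_prod_left'.measurable.const_mul β).exp)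
  have hmgy₂ : Measurable fun y => Zy₂⁻¹ * Real.exp (β * ∫ x, ℓ x y ∂μx₂) :=
    measurable_const.mul
      ((hℓ.stronglyMeasurable.integral_prod_left'.measurable.const_mul β).exp)
  obtain ⟨hy2eq, hy1eq, hy2nn, hy1nn, hyz⟩ :=
    side_lemma mY μy₁ μy₂ hmgy₁ hmgy₂
      (fun y => by positivity) (fun y => by positivity) h₁y h₂y hLY
      (hLYint μy₁) (hLYint μy₂)
  -- the total sum vanishes
  have hsum : relEntropyR μx₂ μx₁ + relEntropyR μx₁ μx₂ +
      relEntropyR μy₂ μy₁ + relEntropyR μy₁ μy₂ = 0 := by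
    rw [hx2eq, hx1eq, hy2eq, hy1eq, hLXval μx₁, hLXval μx₂, hLYval μy₁, hLYval μy₂,
      fub μx₁ μy₁, fub μx₁ μy₂, fub μx₂ μy₁, fub μx₂ μy₂]
    ring
  have hz21 : relEntropyR μx₂ μx₁ = 0 := by linarith
  have hzy21 : relEntropyR μy₂ μy₁ = 0 := by linarith
  exact ⟨by rw [hsum, mul_zero], hxz hz21, hyz hzy21⟩
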